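/- arXiv:2511.19216 — 2 statements merged into one kernel-verified Lean document; each statement's English description precedes it below -/
import Mathlib

section
/- Let Ω, M be Polish spaces, c_H : Ω × Ω → [0,∞] and c_M : M × M → [0,∞] measurable cost functions, M : Ω → M measurable, and L : Ω → [0,∞) measurable. Suppose c_M(M(ω₁), M(ω₂)) ≤ L(ω₂) · max( c_H(ω₁,ω₂)^{1/2} , c_H(ω₁,ω₂)^{1/(2r)} ) for all ω₁, ω₂ in a measurable set of P-probability 1, for some r ≥ 1. Suppose further that P satisfies the transportation cost inequality a₀ · T_{c_H}(ℚ, P) ≤ H(ℚ | P) for all probabilities ℚ on Ω, for some constant a₀ > 0. Then for any 1 ≤ α < 2 and any Borel probability Q on M with H(Q | P_M) < ∞, T_{c_M^α}(Q, P_M) ≤ b_α · max( H(Q|P_M)^{α/2}, H(Q|P_M)^{α/(2r)} ), where b_α = 2 ‖L^α‖_{L^{2/(2-α)}(P)} · max( a₀^{-α/(2r)}, a₀^{-α/2} ) and P_M = P ∘ M⁻¹. -/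
open MeasureTheory ENNReal Filter Topology

noncomputable def transportCost {E : Type*} [MeasurableSpace E]
    (c : E × E → ℝ≥0∞) (μ₁ μ₂ : Measure E) : ℝ≥0∞ :=
  ⨅ (π : Measure (E × E)) (_ : π.fst = μ₁ ∧ π.snd = μ₂), ∫⁻ p, c p ∂π

open Classical in
noncomputable def relEnt {E : Type*} [MeasurableSpace E] (ν μ : Measure E) : ℝ≥0∞ :=
  if ν ≪ μ then ENNReal.ofReal (∫ x, Real.log ((ν.rnDeriv μ x).toReal) ∂ν) else ⊤

private lemma map_withDensity_comp' {α β : Type*} [MeasurableSpace α] [MeasurableSpace β]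
    (μ : Measure α) {F : α → β} (hF : Measurable F) {g : β → ℝ≥0∞} (hg : Measurable g) :
    (μ.withDensity (fun x => g (F x))).map F = (μ.map F).withDensity g := by
  ext s hs
  rw [Measure.map_apply hF hs, withDensity_apply _ (hF hs), withDensity_apply _ hs,
    setLIntegral_map hs hg hF]

private lemma lintegral_rpow_one_div_le' {β : Type*} [MeasurableSpace β]
    (π : Measure β) [IsProbabilityMeasure π] {f : β → ℝ≥0∞} (hf : AEMeasurable f π)
    {r : ℝ} (hr : 1 ≤ r) :
    ∫⁻ x, f x ^ (1/r : ℝ) ∂π ≤ (∫⁻ x, f x ∂π) ^ (1/r : ℝ) := by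
  rcases eq_or_lt_of_le hr with rfl | h1
  · simp
  have hr0 : r ≠ 0 := by linarith
  have hc : r.HolderConjugate (Real.conjExponent r) := .conjExponent h1
  have H := ENNReal.lintegral_mul_le_Lp_mul_Lq π hc (hf.pow_const (1/r))
    (aemeasurable_const (b := (1:ℝ≥0∞)))
  simp only [Pi.mul_apply, mul_one, ENNReal.one_rpow, lintegral_one, measure_univ] at H
  simp_rw [← ENNReal.rpow_mul, one_div_mul_cancel hr0, ENNReal.rpow_one] at H
  simpa using H

/-- Extended contraction principle for transportation cost inequalities
(Gasteratos–Jacquier). -/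
theorem stmt2 {Ω M : Type*}
    [MeasurableSpace Ω] [TopologicalSpace Ω] [PolishSpace Ω] [BorelSpace Ω]
    [MeasurableSpace M] [TopologicalSpace M] [PolishSpace M] [BorelSpace M]
    (P : Measure Ω) [IsProbabilityMeasure P]
    (cH : Ω × Ω → ℝ≥0∞) (hcH : Measurable cH)
    (cM : M × M → ℝ≥0∞) (hcM : Measurable cM)
    (F : Ω → M) (hF : Measurable F)
    (L : Ω → ℝ) (hL : Measurable L) (hL0 : ∀ ω, 0 ≤ L ω)
    (r : ℝ) (hr : 1 ≤ r)
    (S : Set Ω) (hS : MeasurableSet S) (hS1 : P S = 1)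
    (hdom : ∀ ω₁ ∈ S, ∀ ω₂ ∈ S,
      cM (F ω₁, F ω₂) ≤ ENNReal.ofReal (L ω₂)
        * max (cH (ω₁, ω₂) ^ (1/2 : ℝ)) (cH (ω₁, ω₂) ^ (1/(2*r))))
    (a₀ : ℝ) (ha₀ : 0 < a₀)
    (hTCI : ∀ (ρ : Measure Ω), IsProbabilityMeasure ρ →
      ENNReal.ofReal a₀ * transportCost cH ρ P ≤ relEnt ρ P)
    (α : ℝ) (hα1 : 1 ≤ α) (hα2 : α < 2)
    (hLp : eLpNorm (fun ω => L ω ^ α) (ENNReal.ofReal (2/(2-α))) P ≠ ⊤)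
    (Q : Measure M) [IsProbabilityMeasure Q] (hQ : relEnt Q (P.map F) ≠ ⊤) :
    transportCost (fun p => cM p ^ α) Q (P.map F)
      ≤ 2 * eLpNorm (fun ω => L ω ^ α) (ENNReal.ofReal (2/(2-α))) P
        * max ((ENNReal.ofReal a₀)⁻¹ ^ (α/(2*r))) ((ENNReal.ofReal a₀)⁻¹ ^ (α/2))
        * max (relEnt Q (P.map F) ^ (α/2)) (relEnt Q (P.map F) ^ (α/(2*r))) := by
  classical
  haveI : IsProbabilityMeasure (P.map F) := Measure.isProbabilityMeasure_map hF.aemeasurable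
  have hα0 : (0:ℝ) < α := by linarith
  have hr0 : (0:ℝ) < r := by linarith
  -- absolute continuity of Q
  have hQac : Q ≪ P.map F := by
    by_contra h
    simp only [relEnt, if_neg h] at hQ
    exact hQ rfl
  set HQ := relEnt Q (P.map F) with hHQ
  have hHQ_eq : HQ = ENNReal.ofReal (∫ x, Real.log ((Q.rnDeriv (P.map F) x).toReal) ∂Q) := by
    rw [hHQ]; simp only [relEnt, if_pos hQac]
  have hHQ_ne_top : HQ ≠ ⊤ := by rw [hHQ_eq]; exact ENNReal.ofReal_ne_top
  -- the lifted measure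
  set g : M → ℝ≥0∞ := Q.rnDeriv (P.map F) with hgdef
  have hg : Measurable g := Measure.measurable_rnDeriv _ _
  set ρ : Measure Ω := P.withDensity (fun x => g (F x)) with hρdef
  have hmap : ρ.map F = Q := by
    rw [hρdef, map_withDensity_comp' P hF hg, hgdef, Measure.withDensity_rnDeriv_eq _ _ hQac]
  haveI hρprob : IsProbabilityMeasure ρ := by
    constructor
    have : (ρ.map F) Set.univ = ρ Set.univ := by
      rw [Measure.map_apply hF MeasurableSet.univ, Set.preimage_univ]
    rw [← this, hmap, measure_univ]
  have hρac : ρ ≪ P := withDensity_absolutelyContinuous _ _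
  -- relative entropies agree
  have hrel : relEnt ρ P = HQ := by
    have h1 : ρ.rnDeriv P =ᵐ[P] fun x => g (F x) :=
      Measure.rnDeriv_withDensity P (hg.comp hF)
    have h1' : ρ.rnDeriv P =ᵐ[ρ] fun x => g (F x) := hρac.ae_eq h1
    have hmeas : Measurable fun y => Real.log ((g y).toReal) :=
      hg.ennreal_toReal.log
    have h2 : ∫ x, Real.log ((ρ.rnDeriv P x).toReal) ∂ρ
        = ∫ x, Real.log ((g (F x)).toReal) ∂ρ := by
      refine integral_congr_ae ?_
      filter_upwards [h1'] with x hx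
      rw [hx]
    have h3 : ∫ y, Real.log ((g y).toReal) ∂Q
        = ∫ x, Real.log ((g (F x)).toReal) ∂ρ := by
      rw [← hmap]
      exact integral_map hF.aemeasurable hmeas.aestronglyMeasurable
    simp only [relEnt, if_pos hρac]
    rw [h2, ← h3, hHQ_eq, hgdef]
  -- transportation cost bound for ρ
  set a : ℝ≥0∞ := ENNReal.ofReal a₀ with hadef
  have ha0 : a ≠ 0 := (ENNReal.ofReal_pos.mpr ha₀).ne'
  have hatop : a ≠ ⊤ := ENNReal.ofReal_ne_top
  set T := transportCost cH ρ P with hTdef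
  have hT : T ≤ a⁻¹ * HQ := by
    have h := hTCI ρ hρprob
    rw [hrel, ← hTdef] at h
    calc T = a⁻¹ * (a * T) := by
          rw [← mul_assoc, ENNReal.inv_mul_cancel ha0 hatop, one_mul]
    _ ≤ a⁻¹ * HQ := mul_le_mul_right h _
  have hTne : T ≠ ⊤ := by
    refine ne_top_of_le_ne_top ?_ hT
    exact ENNReal.mul_ne_top (ENNReal.inv_ne_top.mpr ha0) hHQ_ne_top
  set N := eLpNorm (fun ω => L ω ^ α) (ENNReal.ofReal (2/(2-α))) P with hNdef
  have hN_ne_top : N ≠ ⊤ := hLp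
  -- the key estimate
  have key : ∀ u : ℝ≥0∞, T < u →
      transportCost (fun p => cM p ^ α) Q (P.map F)
        ≤ 2 * N * max (u ^ (α/2)) (u ^ (α/(2*r))) := by
    intro u hu
    rw [hTdef] at hu
    simp only [transportCost] at hu
    obtain ⟨π, hπ⟩ := iInf_lt_iff.mp hu
    obtain ⟨hm, hπu⟩ := iInf_lt_iff.mp hπ
    haveI hπprob : IsProbabilityMeasure π := by
      constructor
      rw [← Measure.fst_univ, hm.1, measure_univ]
    have hFF : Measurable (Prod.map F F) := hF.prodMap hF
    set π' : Measure (M × M) := π.map (Prod.map F F) with hπ'def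
    have marg1 : π'.fst = Q := by
      show (π.map (Prod.map F F)).map Prod.fst = Q
      rw [Measure.map_map measurable_fst hFF,
        show Prod.fst ∘ Prod.map F F = F ∘ Prod.fst from rfl,
        ← Measure.map_map hF measurable_fst]
      show Measure.map F π.fst = Q
      rw [hm.1, hmap]
    have marg2 : π'.snd = P.map F := by
      show (π.map (Prod.map F F)).map Prod.snd = P.map F
      rw [Measure.map_map measurable_snd hFF,
        show Prod.snd ∘ Prod.map F F = F ∘ Prod.snd from rfl,
        ← Measure.map_map hF measurable_snd]
      show Measure.map F π.snd = P.map F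
      rw [hm.2]
    have hle1 : transportCost (fun p => cM p ^ α) Q (P.map F)
        ≤ ∫⁻ p, cM p ^ α ∂π' := by
      simp only [transportCost]
      exact iInf₂_le π' ⟨marg1, marg2⟩
    have hle2 : ∫⁻ p, cM p ^ α ∂π' = ∫⁻ w, cM (F w.1, F w.2) ^ α ∂π :=
      lintegral_map (hcM.pow_const α) hFF
    -- a.e. domination
    have hPSc : P Sᶜ = 0 := by
      rw [measure_compl hS (measure_ne_top _ _), hS1, measure_univ, tsub_self]
    have hρSc : ρ Sᶜ = 0 := hρac hPSc
    have hS' : π ((S ×ˢ S)ᶜ) = 0 := by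
      have h1 : π (Prod.fst ⁻¹' Sᶜ) = 0 := by
        rw [← Measure.fst_apply hS.compl, hm.1]; exact hρSc
      have h2 : π (Prod.snd ⁻¹' Sᶜ) = 0 := by
        rw [← Measure.snd_apply hS.compl, hm.2]; exact hPSc
      refine measure_mono_null ?_ (measure_union_null h1 h2)
      intro w hw
      simp only [Set.mem_compl_iff, Set.mem_prod, not_and_or] at hw
      simp only [Set.mem_union, Set.mem_preimage, Set.mem_compl_iff]
      exact hw
    have hmem : ∀ᵐ w ∂π, w ∈ S ×ˢ S := by
      rw [ae_iff]
      refine measure_mono_null (fun w hw => ?_) hS'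
      exact hw
    set G : Ω × Ω → ℝ≥0∞ := fun w => max (cH w ^ (α/2)) (cH w ^ (α/(2*r))) with hGdef
    have hGmeas : Measurable G := (hcH.pow_const _).max (hcH.pow_const _)
    have hae : ∀ᵐ w ∂π, cM (F w.1, F w.2) ^ α
        ≤ ENNReal.ofReal (L w.2 ^ α) * G w := by
      filter_upwards [hmem] with w hw
      obtain ⟨h1, h2⟩ := hw
      calc cM (F w.1, F w.2) ^ α
          ≤ (ENNReal.ofReal (L w.2)
              * max (cH (w.1, w.2) ^ (1/2 : ℝ)) (cH (w.1, w.2) ^ (1/(2*r)))) ^ α :=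
            ENNReal.rpow_le_rpow (hdom _ h1 _ h2) (le_of_lt hα0)
        _ = ENNReal.ofReal (L w.2) ^ α
              * (max (cH (w.1, w.2) ^ (1/2 : ℝ)) (cH (w.1, w.2) ^ (1/(2*r)))) ^ α :=
            ENNReal.mul_rpow_of_nonneg _ _ (le_of_lt hα0)
        _ = ENNReal.ofReal (L w.2 ^ α) * G w := by
            rw [ENNReal.ofReal_rpow_of_nonneg (hL0 _) (le_of_lt hα0)]
            congr 1
            rw [(ENNReal.monotone_rpow_of_nonneg (le_of_lt hα0)).map_max,
              ← ENNReal.rpow_mul, ← ENNReal.rpow_mul,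
              show (1/2 : ℝ) * α = α/2 by ring,
              show (1/(2*r)) * α = α/(2*r) by ring]
    have hle3 : ∫⁻ w, cM (F w.1, F w.2) ^ α ∂π
        ≤ ∫⁻ w, ENNReal.ofReal (L w.2 ^ α) * G w ∂π := lintegral_mono_ae hae
    -- Hölder
    set p : ℝ := 2/(2-α) with hpdef
    set q : ℝ := 2/α with hqdef
    have h2α : (0:ℝ) < 2 - α := by linarith
    have hpq : p.HolderConjugate q := by
      rw [Real.holderConjugate_iff]
      constructor
      · rw [hpdef, lt_div_iff₀ h2α]; linarith
      · rw [hpdef, hqdef]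
        field_simp
        ring
    have hLmeas : Measurable fun w : Ω × Ω => ENNReal.ofReal (L w.2 ^ α) :=
      ((hL.pow_const α).comp measurable_snd).ennreal_ofReal
    have holder : ∫⁻ w, ENNReal.ofReal (L w.2 ^ α) * G w ∂π
        ≤ (∫⁻ w, ENNReal.ofReal (L w.2 ^ α) ^ p ∂π) ^ (1/p)
          * (∫⁻ w, G w ^ q ∂π) ^ (1/q) := by
      have := ENNReal.lintegral_mul_le_Lp_mul_Lq π hpq hLmeas.aemeasurable
        hGmeas.aemeasurable
      simpa using this
    -- first factor equals N
    have hfac1 : (∫⁻ w, ENNReal.ofReal (L w.2 ^ α) ^ p ∂π) ^ (1/p) = N := by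
      have hsnd : ∫⁻ w, ENNReal.ofReal (L w.2 ^ α) ^ p ∂π
          = ∫⁻ ω, ENNReal.ofReal (L ω ^ α) ^ p ∂P := by
        have := lintegral_map (μ := π) (f := fun ω => ENNReal.ofReal (L ω ^ α) ^ p)
          (g := (Prod.snd : Ω × Ω → Ω))
          (((hL.pow_const α).ennreal_ofReal).pow_const p) measurable_snd
        rw [show π.map Prod.snd = Measure.snd π from rfl, hm.2] at this
        exact this.symm
      rw [hsnd, hNdef]
      have hp0 : ENNReal.ofReal p ≠ 0 := by
        simp only [ne_eq, ENNReal.ofReal_eq_zero, not_le]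
        rw [hpdef]; positivity
      rw [eLpNorm_eq_lintegral_rpow_enorm_toReal hp0 ENNReal.ofReal_ne_top]
      rw [ENNReal.toReal_ofReal (by rw [hpdef]; positivity)]
      congr 1
      refine lintegral_congr fun ω => ?_
      congr 1
      rw [Real.enorm_eq_ofReal (Real.rpow_nonneg (hL0 ω) α)]
    -- second factor
    have hGq : ∀ w, G w ^ q = max (cH w) (cH w ^ (1/r : ℝ)) := by
      intro w
      rw [hGdef]
      rw [(ENNReal.monotone_rpow_of_nonneg (by rw [hqdef]; positivity)).map_max,
        ← ENNReal.rpow_mul, ← ENNReal.rpow_mul,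
        show (α/2) * q = 1 by rw [hqdef]; field_simp,
        show (α/(2*r)) * q = 1/r by rw [hqdef]; field_simp,
        ENNReal.rpow_one]
    have hfac2 : ∫⁻ w, G w ^ q ∂π ≤ 2 * max u (u ^ (1/r : ℝ)) := by
      have hb : ∫⁻ w, G w ^ q ∂π ≤ ∫⁻ w, cH w + cH w ^ (1/r : ℝ) ∂π := by
        refine lintegral_mono fun w => ?_
        rw [hGq w]
        exact max_le (le_add_right le_rfl) (le_add_left le_rfl)
      rw [lintegral_add_left hcH] at hb
      have hJ : ∫⁻ w, cH w ^ (1/r : ℝ) ∂π ≤ (∫⁻ w, cH w ∂π) ^ (1/r : ℝ) :=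
        lintegral_rpow_one_div_le' π hcH.aemeasurable hr
      have hcu : ∫⁻ w, cH w ∂π ≤ u := le_of_lt hπu
      calc ∫⁻ w, G w ^ q ∂π ≤ (∫⁻ w, cH w ∂π) + (∫⁻ w, cH w ∂π) ^ (1/r : ℝ) :=
            hb.trans (add_le_add_right hJ _)
        _ ≤ u + u ^ (1/r : ℝ) :=
            add_le_add hcu (ENNReal.rpow_le_rpow hcu (by positivity))
        _ ≤ max u (u ^ (1/r : ℝ)) + max u (u ^ (1/r : ℝ)) :=
            add_le_add (le_max_left _ _) (le_max_right _ _)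
        _ = 2 * max u (u ^ (1/r : ℝ)) := (two_mul _).symm
    have h1q : (1:ℝ)/q = α/2 := by rw [hqdef, one_div_div]
    have hfac2' : (∫⁻ w, G w ^ q ∂π) ^ (1/q)
        ≤ 2 * max (u ^ (α/2)) (u ^ (α/(2*r))) := by
      calc (∫⁻ w, G w ^ q ∂π) ^ (1/q)
          ≤ (2 * max u (u ^ (1/r : ℝ))) ^ (1/q) :=
            ENNReal.rpow_le_rpow hfac2 (by rw [h1q]; positivity)
        _ = 2 ^ (α/2) * max (u ^ (α/2)) ((u ^ (1/r : ℝ)) ^ (α/2)) := by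
            rw [h1q, ENNReal.mul_rpow_of_nonneg _ _ (by positivity),
              (ENNReal.monotone_rpow_of_nonneg (by positivity : (0:ℝ) ≤ α/2)).map_max]
        _ ≤ 2 * max (u ^ (α/2)) (u ^ (α/(2*r))) := by
            rw [← ENNReal.rpow_mul, show (1/r) * (α/2) = α/(2*r) by rw [div_mul_div_comm, one_mul, mul_comm r 2]]
            refine mul_le_mul' ?_ le_rfl
            calc (2:ℝ≥0∞) ^ (α/2) ≤ 2 ^ (1:ℝ) :=
                  ENNReal.rpow_le_rpow_of_exponent_le (by norm_num) (by linarith)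
              _ = 2 := ENNReal.rpow_one 2
    -- combine
    calc transportCost (fun p => cM p ^ α) Q (P.map F)
        ≤ ∫⁻ w, ENNReal.ofReal (L w.2 ^ α) * G w ∂π := by
          rw [← hle2] at hle3; exact hle1.trans (hle2.le.trans (hle2.ge.trans hle3))
      _ ≤ (∫⁻ w, ENNReal.ofReal (L w.2 ^ α) ^ p ∂π) ^ (1/p)
            * (∫⁻ w, G w ^ q ∂π) ^ (1/q) := holder
      _ ≤ N * (2 * max (u ^ (α/2)) (u ^ (α/(2*r)))) := by
          rw [hfac1]
          exact mul_le_mul' le_rfl hfac2'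
      _ = 2 * N * max (u ^ (α/2)) (u ^ (α/(2*r))) := by ring
  -- pass to the limit u → T
  have hlim : transportCost (fun p => cM p ^ α) Q (P.map F)
      ≤ 2 * N * max (T ^ (α/2)) (T ^ (α/(2*r))) := by
    have htend : Filter.Tendsto (fun n : ℕ => T + (n : ℝ≥0∞)⁻¹) Filter.atTop (𝓝 T) := by
      have := ENNReal.tendsto_inv_nat_nhds_zero
      have h := Filter.Tendsto.add (tendsto_const_nhds (x := T)) this
      simpa using h
    have htendf : Filter.Tendsto
        (fun n : ℕ => 2 * N * max ((T + (n : ℝ≥0∞)⁻¹) ^ (α/2))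
          ((T + (n : ℝ≥0∞)⁻¹) ^ (α/(2*r)))) Filter.atTop
        (𝓝 (2 * N * max (T ^ (α/2)) (T ^ (α/(2*r))))) := by
      refine ENNReal.Tendsto.const_mul ?_ (Or.inr ?_)
      · exact (htend.ennrpow_const _).max (htend.ennrpow_const _)
      · exact ENNReal.mul_ne_top (by norm_num) hN_ne_top
    refine le_of_tendsto_of_tendsto tendsto_const_nhds htendf ?_
    refine Filter.Eventually.of_forall fun n => ?_
    refine key _ ?_
    exact ENNReal.lt_add_right hTne (by simp)
  -- conclude
  refine hlim.trans ?_
  rw [mul_assoc (2 * N)]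
  refine mul_le_mul' le_rfl ?_
  have hTb : ∀ β : ℝ, 0 ≤ β → T ^ β ≤ a⁻¹ ^ β * HQ ^ β := by
    intro β hβ
    calc T ^ β ≤ (a⁻¹ * HQ) ^ β := ENNReal.rpow_le_rpow hT hβ
      _ = a⁻¹ ^ β * HQ ^ β := ENNReal.mul_rpow_of_nonneg _ _ hβ
  refine max_le ?_ ?_
  · calc T ^ (α/2) ≤ a⁻¹ ^ (α/2) * HQ ^ (α/2) := hTb _ (by positivity)
      _ ≤ (max (a⁻¹ ^ (α/(2*r))) (a⁻¹ ^ (α/2)))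
          * max (HQ ^ (α/2)) (HQ ^ (α/(2*r))) :=
        mul_le_mul' (le_max_right _ _) (le_max_left _ _)
  · calc T ^ (α/(2*r)) ≤ a⁻¹ ^ (α/(2*r)) * HQ ^ (α/(2*r)) := hTb _ (by positivity)
      _ ≤ (max (a⁻¹ ^ (α/(2*r))) (a⁻¹ ^ (α/2)))
          * max (HQ ^ (α/2)) (HQ ^ (α/(2*r))) :=
        mul_le_mul' (le_max_left _ _) (le_max_right _ _)
end

section
/- Let (E,d) be a Polish space, x₀ ∈ E, and μ a Borel probability on E. If ∫_E exp(κ d(x₀,x)²) μ(dx) < ∞ for some κ > 0, then μ has Gaussian concentration: there exist constants a₁, a₂ > 0 such that for every 1-Lipschitz function F : E → ℝ with median m_F, μ(F - m_F > r) ≤ a₁ exp(-a₂ r²) for all r > 0. -/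
open MeasureTheory ENNReal

/-- Exponential square integrability of the distance implies Gaussian concentration
around medians for 1-Lipschitz functions. -/
theorem stmt6 {E : Type*} [MetricSpace E] [CompleteSpace E] [SecondCountableTopology E]
    [MeasurableSpace E] [BorelSpace E]
    (x₀ : E) (μ : Measure E) [IsProbabilityMeasure μ]
    (κ : ℝ) (hκ : 0 < κ)
    (hint : Integrable (fun x => Real.exp (κ * dist x₀ x ^ 2)) μ) :
    ∃ a₁ > (0:ℝ), ∃ a₂ > (0:ℝ), ∀ F : E → ℝ, LipschitzWith 1 F →
      ∀ m : ℝ, (1/2 : ℝ≥0∞) ≤ μ {x | F x ≤ m} → (1/2 : ℝ≥0∞) ≤ μ {x | m ≤ F x} →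
      ∀ r > (0:ℝ), μ {x | F x - m > r} ≤ ENNReal.ofReal (a₁ * Real.exp (-a₂ * r ^ 2)) := by
  set C : ℝ := ∫ x, Real.exp (κ * dist x₀ x ^ 2) ∂μ with hC
  have hC1 : 1 ≤ C := by
    have : (1:ℝ) = ∫ _x, (1:ℝ) ∂μ := by simp
    rw [this]
    exact integral_mono (integrable_const 1) hint fun x => Real.one_le_exp (by positivity)
  have hCpos : 0 < C := lt_of_lt_of_le one_pos hC1
  -- Markov inequality
  have markov : ∀ s : ℝ, 0 ≤ s →
      μ {x | s ≤ dist x₀ x} ≤ ENNReal.ofReal (C * Real.exp (-κ * s ^ 2)) := by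
    intro s hs
    have hsub : {x | s ≤ dist x₀ x} ⊆
        {x | Real.exp (κ * s ^ 2) ≤ Real.exp (κ * dist x₀ x ^ 2)} := by
      intro x hx
      simp only [Set.mem_setOf_eq] at hx ⊢
      exact Real.exp_le_exp.2 (by nlinarith [mul_le_mul hx hx hs dist_nonneg, hκ.le])
    refine le_trans (measure_mono hsub) ?_
    have hmk := mul_meas_ge_le_integral_of_nonneg
      (f := fun x => Real.exp (κ * dist x₀ x ^ 2))
      (Filter.Eventually.of_forall fun x => (Real.exp_pos _).le) hint (Real.exp (κ * s ^ 2))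
    have hfin : μ {x | Real.exp (κ * s ^ 2) ≤ Real.exp (κ * dist x₀ x ^ 2)} ≠ ⊤ :=
      (measure_lt_top μ _).ne
    rw [ENNReal.le_ofReal_iff_toReal_le hfin (by positivity)]
    have hεpos : 0 < Real.exp (κ * s ^ 2) := Real.exp_pos _
    have hmul : Real.exp (-κ * s ^ 2) * Real.exp (κ * s ^ 2) = 1 := by
      rw [← Real.exp_add]; ring_nf; exact Real.exp_zero
    rw [measureReal_def] at hmk
    nlinarith [ENNReal.toReal_nonneg (a := μ {x | Real.exp (κ * s ^ 2) ≤ Real.exp (κ * dist x₀ x ^ 2)}),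
      hmk, Real.exp_pos (-κ * s ^ 2)]
  -- choose D so that the ball of radius D around x₀ has measure > 1/2
  set D : ℝ := Real.sqrt ((Real.log (2 * C) + 1) / κ) with hD
  have hlog : 0 < Real.log (2 * C) + 1 := by
    have : (0:ℝ) ≤ Real.log (2 * C) := Real.log_nonneg (by linarith)
    linarith
  have hD2 : D ^ 2 = (Real.log (2 * C) + 1) / κ := Real.sq_sqrt (by positivity)
  have hDpos : 0 < D := Real.sqrt_pos.2 (by positivity)
  have hball : μ {x | D < dist x₀ x} < 1 / 2 := by
    have h1 : μ {x | D < dist x₀ x} ≤ ENNReal.ofReal (C * Real.exp (-κ * D ^ 2)) := by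
      have hsub' : {x | D < dist x₀ x} ⊆ {x | D ≤ dist x₀ x} := fun x hx => le_of_lt (Set.mem_setOf_eq ▸ hx)
      exact le_trans (measure_mono hsub') (markov D hDpos.le)
    have h2 : C * Real.exp (-κ * D ^ 2) < 1 / 2 := by
      have : -κ * D ^ 2 = -(Real.log (2 * C) + 1) := by
        rw [hD2]; field_simp
      rw [this, Real.exp_neg, Real.exp_add, Real.exp_log (by linarith : (0:ℝ) < 2 * C)]
      have he : (1:ℝ) < Real.exp 1 := by
        have := Real.add_one_le_exp (1:ℝ); linarith
      have h2e : (0:ℝ) < 2 * Real.exp 1 := by positivity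
      have hCe : C * (2 * C * Real.exp 1)⁻¹ = (2 * Real.exp 1)⁻¹ := by
        rw [mul_comm 2 C, mul_assoc, mul_inv, ← mul_assoc, mul_inv_cancel₀ hCpos.ne']
        rw [one_mul, mul_inv]
      rw [hCe]
      have hc : (2 * Real.exp 1) * (2 * Real.exp 1)⁻¹ = 1 := mul_inv_cancel₀ h2e.ne'
      nlinarith [hc, he, h2e, inv_nonneg.2 h2e.le]
    calc μ {x | D < dist x₀ x} ≤ ENNReal.ofReal (C * Real.exp (-κ * D ^ 2)) := h1
      _ < ENNReal.ofReal (1 / 2) := by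
          exact ENNReal.ofReal_lt_ofReal_iff (by norm_num) |>.2 h2
      _ = 1 / 2 := by
          rw [ENNReal.ofReal_div_of_pos (by norm_num)]; norm_num
  refine ⟨C * Real.exp (κ * D ^ 2), by positivity, κ / 2, by positivity, ?_⟩
  intro F hF m hm₁ _hm₂ r hr
  -- find y with F y ≤ m and dist x₀ y ≤ D
  obtain ⟨y, hy₁, hy₂⟩ : ∃ y, F y ≤ m ∧ dist x₀ y ≤ D := by
    by_contra hcon
    push_neg at hcon
    have hsub : {x | F x ≤ m} ⊆ {x | D < dist x₀ x} := fun x hx => hcon x hx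
    exact absurd (lt_of_le_of_lt (le_trans hm₁ (measure_mono hsub)) hball) (lt_irrefl _)
  have key : ∀ x, F x - m > r → r - D ≤ dist x₀ x := by
    intro x hx
    have h1 : F x - F y ≤ dist x y := by
      have := hF.dist_le_mul x y
      rw [NNReal.coe_one, one_mul] at this
      calc F x - F y ≤ |F x - F y| := le_abs_self _
        _ = dist (F x) (F y) := (Real.dist_eq _ _).symm
        _ ≤ dist x y := this
    have h2 : dist x y ≤ dist x₀ x + dist x₀ y := by
      rw [dist_comm x₀ x]; exact dist_triangle x x₀ y
    linarith
  have hsub2 : {x | F x - m > r} ⊆ {x | r - D ≤ dist x₀ x} := fun x hx => key x hx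
  rcases le_or_gt r D with hrD | hrD
  · -- trivial bound: RHS ≥ 1
    have hRHS : (1:ℝ) ≤ C * Real.exp (κ * D ^ 2) * Real.exp (-(κ / 2) * r ^ 2) := by
      rw [mul_assoc, ← Real.exp_add]
      have : 0 ≤ κ * D ^ 2 + -(κ / 2) * r ^ 2 := by
        nlinarith [mul_le_mul hrD hrD hr.le hDpos.le, hκ.le]
      nlinarith [Real.one_le_exp this, hC1, Real.exp_pos (κ * D ^ 2 + -(κ / 2) * r ^ 2)]
    calc μ {x | F x - m > r} ≤ 1 := prob_le_one
      _ = ENNReal.ofReal 1 := by simp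
      _ ≤ ENNReal.ofReal (C * Real.exp (κ * D ^ 2) * Real.exp (-(κ / 2) * r ^ 2)) :=
          ENNReal.ofReal_le_ofReal hRHS
  · -- main case r > D
    have hs : 0 ≤ r - D := by linarith
    have h1 : μ {x | F x - m > r} ≤ ENNReal.ofReal (C * Real.exp (-κ * (r - D) ^ 2)) :=
      le_trans (measure_mono hsub2) (markov _ hs)
    refine le_trans h1 (ENNReal.ofReal_le_ofReal ?_)
    rw [mul_assoc, ← Real.exp_add]
    have hexp : -κ * (r - D) ^ 2 ≤ κ * D ^ 2 + -(κ / 2) * r ^ 2 := by nlinarith [sq_nonneg (r - 2 * D)]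
    exact mul_le_mul_of_nonneg_left (Real.exp_le_exp.2 hexp) hCpos.le
end
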